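/- Let R_d(z,w) = (w − z²)³ / ((w + 8z²)(z − 1)(w + 8z² + 4w² + 5wz² − 14zw − 4z³)). Then: (1) for every t ∈ ℂ, setting z₃(t) = −(9t + 32)(t + 8)/(40t(3 + t)) and w₃(t) = −(t + 8)²(3t + 8)(3t + 4)/(40t²(t + 3)²), if t(3 + t) ≠ 0 and the denominator of R_d at (z₃(t), w₃(t)) is nonzero, then R_d(z₃(t), w₃(t)) = −9/32; (2) for every (z, w) ∈ ℂ² with w + 8z² − 9zw = 0 and the denominator of R_d at (z, w) nonzero, one has R_d(z, w) = −9/32. (Thus the critical level curve {R_d = −9/32} contains the rational quartic parametrized by (z₃, w₃) and the conic {w + 8z² − 9zw = 0}.) -/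
import Mathlib

set_option maxHeartbeats 1000000 in
/-- The critical level curve `{R_d = −9/32}` of the type d integral contains the rational
quartic parametrized by `(z₃, w₃)` and the conic `{w + 8z² − 9zw = 0}`. -/
theorem stmt_15 (Rd : ℂ → ℂ → ℂ)
    (hRd : ∀ z w : ℂ, Rd z w = (w - z^2)^3 /
      ((w + 8*z^2) * (z - 1) * (w + 8*z^2 + 4*w^2 + 5*w*z^2 - 14*z*w - 4*z^3))) :
    (∀ t : ℂ, t * (3 + t) ≠ 0 →
      ∀ z₃ w₃ : ℂ,
        z₃ = -((9*t + 32) * (t + 8)) / (40 * t * (3 + t)) →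
        w₃ = -((t + 8)^2 * (3*t + 8) * (3*t + 4)) / (40 * t^2 * (t + 3)^2) →
        (w₃ + 8*z₃^2) * (z₃ - 1) *
          (w₃ + 8*z₃^2 + 4*w₃^2 + 5*w₃*z₃^2 - 14*z₃*w₃ - 4*z₃^3) ≠ 0 →
        Rd z₃ w₃ = -9/32) ∧
    (∀ z w : ℂ, w + 8*z^2 - 9*z*w = 0 →
      (w + 8*z^2) * (z - 1) *
        (w + 8*z^2 + 4*w^2 + 5*w*z^2 - 14*z*w - 4*z^3) ≠ 0 →
      Rd z w = -9/32) := by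
  constructor
  · intro t ht z₃ w₃ hz hw hden
    have ht0 : t ≠ 0 := fun h => ht (by simp [h])
    have ht3 : (3 : ℂ) + t ≠ 0 := fun h => ht (by simp [h])
    have ht3' : t + 3 ≠ 0 := by rwa [add_comm] at ht3
    set A : ℂ := -((9*t + 32) * (t + 8)) with hA
    set B : ℂ := 40 * t * (3 + t) with hB
    set C : ℂ := -((t + 8)^2 * (3*t + 8) * (3*t + 4)) with hC
    set D : ℂ := 40 * t^2 * (t + 3)^2 with hD
    have hBne : B ≠ 0 := mul_ne_zero (mul_ne_zero (by norm_num) ht0) ht3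
    have hDne : D ≠ 0 :=
      mul_ne_zero (mul_ne_zero (by norm_num) (pow_ne_zero 2 ht0)) (pow_ne_zero 2 ht3')
    have hz' : z₃ * B = A := by rw [hz, div_mul_cancel₀ _ hBne]
    have hw' : w₃ * D = C := by rw [hw, div_mul_cancel₀ _ hDne]
    have hBD : B^2 = 40 * D := by rw [hB, hD]; ring
    have e0 : (w₃ - z₃^2) * B^2 = 40*C - A^2 := by
      linear_combination 40 * hw' - (z₃*B + A) * hz' + (w₃ - z₃^2) * hBD
    have e1 : (w₃ + 8*z₃^2) * B^2 = 40*C + 8*A^2 := by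
      linear_combination 40 * hw' + 8*(z₃*B + A) * hz' + (w₃ + 8*z₃^2) * hBD
    have e2 : (z₃ - 1) * B = A - B := by linear_combination hz'
    have e3 : (w₃ + 8*z₃^2 + 4*w₃^2 + 5*w₃*z₃^2 - 14*z₃*w₃ - 4*z₃^3) * B^4 =
        40*C*B^2 + 8*A^2*B^2 + 6400*C^2 + 200*C*A^2 - 560*A*C*B - 4*A^3*B := by
      linear_combination
        (1600*D + 6400*(w₃*D + C) + 200*(z₃*B)^2 - 560*B*A) * hw' +
        (8*B^2*(z₃*B + A) + 200*C*(z₃*B + A) - 560*B*(w₃*D)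
          - 4*B*((z₃*B)^2 + z₃*B*A + A^2)) * hz' +
        (w₃ + 8*z₃^2 + 4*w₃^2 + 5*w₃*z₃^2 - 14*z₃*w₃ - 4*z₃^3) * (B^2 + 40*D) * hBD
    have hkey : 32 * ((w₃ - z₃^2) * B^2)^3 * B =
        -9 * (((w₃ + 8*z₃^2) * B^2) * ((z₃ - 1) * B) *
          ((w₃ + 8*z₃^2 + 4*w₃^2 + 5*w₃*z₃^2 - 14*z₃*w₃ - 4*z₃^3) * B^4)) := by
      rw [e0, e1, e2, e3, hA, hB, hC]
      ring
    rw [hRd, div_eq_iff hden]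
    have h2 : B^7 * ((w₃ - z₃^2)^3) =
        B^7 * (-9/32 * ((w₃ + 8*z₃^2) * (z₃ - 1) *
          (w₃ + 8*z₃^2 + 4*w₃^2 + 5*w₃*z₃^2 - 14*z₃*w₃ - 4*z₃^3))) := by
      linear_combination hkey / 32
    exact mul_left_cancel₀ (pow_ne_zero 7 hBne) h2
  · intro z w h hden
    rw [hRd, div_eq_iff hden]
    linear_combination ((-4*w^2 - 37*z^2*w + 54*z*w - 9*w - 40*z^4 + 108*z^3 - 72*z^2)/32) * h
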